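/- Let p ≥ 3 be a prime and k₁, k₂ integers with k₁ ≥ 0.4(p-1), k₂ ≥ 0.4(p-1). Then the set I = {n mod p : -k₁ ≤ n ≤ k₂} admits a nontrivial multiplicative decomposition: there exist A, B ⊆ 𝔽_p with |A| ≥ 2, |B| ≥ 2, and I \ {0} = A·B. -/
import Mathlib

open Finset Pointwise

section Aux

variable (p : ℕ) [Fact p.Prime]

lemma aux_mem_image (k₁ k₂ : ℤ) (hk₁ : 0 ≤ k₁) (hk₂ : 0 ≤ k₂) (x : ZMod p)
    (h : (x.val : ℤ) ≤ k₂ ∨ (p : ℤ) - x.val ≤ k₁) :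
    x ∈ (Finset.Icc (-k₁) k₂).image (fun n : ℤ => (n : ZMod p)) := by
  have hvl : (x.val : ℤ) < p := by exact_mod_cast x.val_lt
  rcases h with h | h
  · have h0 : (0 : ℤ) ≤ (x.val : ℤ) := Int.natCast_nonneg _
    refine Finset.mem_image.mpr ⟨(x.val : ℤ), Finset.mem_Icc.mpr ⟨by linarith, h⟩, ?_⟩
    push_cast
    exact ZMod.natCast_zmod_val x
  · refine Finset.mem_image.mpr ⟨(x.val : ℤ) - p, Finset.mem_Icc.mpr ⟨by linarith, by linarith⟩, ?_⟩
    push_cast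
    simp [ZMod.natCast_self, ZMod.natCast_zmod_val]

end Aux

/-- For p ≥ 3 prime and k₁, k₂ ≥ 0.4(p-1), the interval
I = {-k₁, …, k₂} mod p admits a nontrivial multiplicative decomposition. -/
theorem symmetric_long_interval_decomposition
    (p : ℕ) [Fact p.Prime] (hp : 3 ≤ p)
    (k₁ k₂ : ℤ)
    (hk₁ : (0.4 : ℚ) * ((p : ℚ) - 1) ≤ (k₁ : ℚ))
    (hk₂ : (0.4 : ℚ) * ((p : ℚ) - 1) ≤ (k₂ : ℚ)) :
    ∃ A B : Finset (ZMod p), 2 ≤ A.card ∧ 2 ≤ B.card ∧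
      ((Finset.Icc (-k₁) k₂).image (fun n : ℤ => (n : ZMod p))).erase 0 = A * B := by
  have hpQ : (3 : ℚ) ≤ p := by exact_mod_cast hp
  have hk₁' : (1 : ℤ) ≤ k₁ := by
    have h1 : (0 : ℚ) < (k₁ : ℚ) := by linarith
    have : (0 : ℤ) < k₁ := by exact_mod_cast h1
    omega
  have hk₂' : (1 : ℤ) ≤ k₂ := by
    have h1 : (0 : ℚ) < (k₂ : ℚ) := by linarith
    have : (0 : ℤ) < k₂ := by exact_mod_cast h1
    omega
  set I : Finset (ZMod p) := (Finset.Icc (-k₁) k₂).image (fun n : ℤ => (n : ZMod p)) with hI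
  by_cases hfull : (p : ℤ) - 1 ≤ k₁ + k₂
  · -- the interval covers everything
    have huniv : I = Finset.univ := by
      apply Finset.eq_univ_of_forall
      intro x
      have hvl : ((x.val : ℤ)) < p := by exact_mod_cast x.val_lt
      apply aux_mem_image p k₁ k₂ (by linarith) (by linarith)
      by_cases h : (x.val : ℤ) ≤ k₂
      · exact Or.inl h
      · exact Or.inr (by linarith)
    refine ⟨Finset.univ.erase 0, Finset.univ.erase 0, ?_, ?_, ?_⟩
    · rw [Finset.card_erase_of_mem (Finset.mem_univ _), Finset.card_univ, ZMod.card]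
      omega
    · rw [Finset.card_erase_of_mem (Finset.mem_univ _), Finset.card_univ, ZMod.card]
      omega
    · rw [huniv]
      ext x
      simp only [Finset.mem_mul, Finset.mem_erase, Finset.mem_univ, and_true]
      constructor
      · intro hx
        exact ⟨x, hx, 1, one_ne_zero, mul_one x⟩
      · rintro ⟨a, ha, b, hb, rfl⟩
        exact mul_ne_zero ha hb
  · -- main case : k₁ + k₂ ≤ p - 2
    push_neg at hfull
    have hsum : k₁ + k₂ ≤ (p : ℤ) - 2 := by omega
    have hp6 : (6 : ℚ) ≤ (p : ℚ) := by
      have : ((k₁ : ℚ)) + k₂ ≤ (p : ℚ) - 2 := by exact_mod_cast hsum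
      nlinarith
    have hk₁2 : (2 : ℤ) ≤ k₁ := by
      have : (2 : ℚ) ≤ (k₁ : ℚ) := by nlinarith
      exact_mod_cast this
    have hk₂2 : (2 : ℤ) ≤ k₂ := by
      have : (2 : ℚ) ≤ (k₂ : ℚ) := by nlinarith
      exact_mod_cast this
    have h2ne : (2 : ZMod p) ≠ 0 := by
      have : ((2 : ℕ) : ZMod p) ≠ 0 := by
        rw [Ne, ZMod.natCast_eq_zero_iff]
        intro h
        have := Nat.le_of_dvd (by norm_num) h
        omega
      simpa using this
    -- the key dichotomy
    have key : ∀ x : ZMod p, x ≠ 0 → (2 * x ∈ I ∨ x * (2 : ZMod p)⁻¹ ∈ I) := by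
      intro x hx
      by_contra hcon
      push_neg at hcon
      obtain ⟨hy, hz⟩ := hcon
      set y : ZMod p := 2 * x with hy'
      set z : ZMod p := x * (2 : ZMod p)⁻¹ with hz'
      have hyne : y ≠ 0 := mul_ne_zero h2ne hx
      have hzne : z ≠ 0 := mul_ne_zero hx (inv_ne_zero h2ne)
      -- bounds on vals
      have hyb : k₂ + 1 ≤ (y.val : ℤ) ∧ (y.val : ℤ) ≤ (p : ℤ) - 1 - k₁ := by
        by_contra hb
        push_neg at hb
        apply hy
        apply aux_mem_image p k₁ k₂ (by omega) (by omega)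
        have hvl : ((y.val : ℤ)) < p := by exact_mod_cast y.val_lt
        by_cases h : (y.val : ℤ) ≤ k₂
        · exact Or.inl h
        · exact Or.inr (by omega)
      have hzb : k₂ + 1 ≤ (z.val : ℤ) ∧ (z.val : ℤ) ≤ (p : ℤ) - 1 - k₁ := by
        by_contra hb
        push_neg at hb
        apply hz
        apply aux_mem_image p k₁ k₂ (by omega) (by omega)
        have hvl : ((z.val : ℤ)) < p := by exact_mod_cast z.val_lt
        by_cases h : (z.val : ℤ) ≤ k₂
        · exact Or.inl h
        · exact Or.inr (by omega)
      -- relation : y = 4 z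
      have hrel : (4 : ZMod p) * z = y := by
        rw [hy', hz']
        field_simp
        ring
      have hdvd : (p : ℤ) ∣ 4 * (z.val : ℤ) - (y.val : ℤ) := by
        rw [← ZMod.intCast_zmod_eq_zero_iff_dvd]
        push_cast
        rw [ZMod.natCast_zmod_val, ZMod.natCast_zmod_val]
        rw [hrel]
        ring
      obtain ⟨c, hc⟩ := hdvd
      -- numeric bounds : p + 3 ≤ 4 z.val - y.val ≤ 2p - 3
      have hb1 : (k₁ : ℚ) + 4 * k₂ ≥ 2 * ((p : ℚ) - 1) := by linarith
      have hb2 : 4 * (k₁ : ℚ) + k₂ ≥ 2 * ((p : ℚ) - 1) := by linarith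
      have hb1' : k₁ + 4 * k₂ ≥ 2 * ((p : ℤ) - 1) := by exact_mod_cast hb1
      have hb2' : 4 * k₁ + k₂ ≥ 2 * ((p : ℤ) - 1) := by exact_mod_cast hb2
      have hlow : (p : ℤ) + 3 ≤ 4 * (z.val : ℤ) - (y.val : ℤ) := by omega
      have hhigh : 4 * (z.val : ℤ) - (y.val : ℤ) ≤ 2 * (p : ℤ) - 3 := by omega
      have hp3 : (3 : ℤ) ≤ (p : ℤ) := by exact_mod_cast hp
      rw [hc] at hlow hhigh
      have hppos : (0 : ℤ) < (p : ℤ) := by linarith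
      have hc1 : (1 : ℤ) < c :=
        lt_of_mul_lt_mul_left (by linarith : (p : ℤ) * 1 < (p : ℤ) * c) hppos.le
      have : (p : ℤ) * 2 ≤ (p : ℤ) * c := mul_le_mul_of_nonneg_left (by omega) hppos.le
      linarith
    -- construct the decomposition
    refine ⟨{1, 2}, (I.erase 0).filter (fun x => 2 * x ∈ I.erase 0), ?_, ?_, ?_⟩
    · rw [Finset.card_insert_of_notMem, Finset.card_singleton]
      simp only [Finset.mem_singleton]
      intro h
      apply h2ne
      have : (2 : ZMod p) - 1 = 0 := by rw [← h]; ring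
      have h1 : (1 : ZMod p) = 0 := by linear_combination this
      linear_combination 2 * h1
    · -- B contains 1 and -1
      have hmem : ∀ n : ℤ, -k₁ ≤ n → n ≤ k₂ → ((n : ZMod p) ∈ I) := by
        intro n h1 h2
        exact Finset.mem_image.mpr ⟨n, Finset.mem_Icc.mpr ⟨h1, h2⟩, rfl⟩
      have h1I : (1 : ZMod p) ∈ I := by simpa using hmem 1 (by omega) (by omega)
      have h2I : (2 : ZMod p) ∈ I := by simpa using hmem 2 (by omega) (by omega)
      have hm1I : (-1 : ZMod p) ∈ I := by simpa using hmem (-1) (by omega) (by omega)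
      have hm2I : (-2 : ZMod p) ∈ I := by simpa using hmem (-2) (by omega) (by omega)
      have h1ne : (1 : ZMod p) ≠ 0 := one_ne_zero
      have hm1ne : (-1 : ZMod p) ≠ 0 := neg_ne_zero.mpr one_ne_zero
      have hne11 : (-1 : ZMod p) ≠ 1 := by
        have : Fact (2 < p) := ⟨hp⟩
        exact ZMod.neg_one_ne_one
      have hsub : ({1, -1} : Finset (ZMod p)) ⊆
          (I.erase 0).filter (fun x => 2 * x ∈ I.erase 0) := by
        intro x hx
        simp only [Finset.mem_insert, Finset.mem_singleton] at hx
        rcases hx with rfl | rfl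
        · refine Finset.mem_filter.mpr ⟨Finset.mem_erase.mpr ⟨h1ne, h1I⟩, ?_⟩
          rw [mul_one]
          exact Finset.mem_erase.mpr ⟨h2ne, h2I⟩
        · refine Finset.mem_filter.mpr ⟨Finset.mem_erase.mpr ⟨hm1ne, hm1I⟩, ?_⟩
          have : (2 : ZMod p) * (-1) = -2 := by ring
          rw [this]
          exact Finset.mem_erase.mpr ⟨neg_ne_zero.mpr h2ne, hm2I⟩
      calc (2 : ℕ) = ({1, -1} : Finset (ZMod p)).card := by
            rw [Finset.card_insert_of_notMem (by simpa using hne11.symm), Finset.card_singleton]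
        _ ≤ _ := Finset.card_le_card hsub
    · -- the set equality
      ext x
      simp only [Finset.mem_mul, Finset.mem_filter, Finset.mem_erase, Finset.mem_insert,
        Finset.mem_singleton]
      constructor
      · intro hx
        obtain ⟨hxne, hxI⟩ := hx
        rcases key x hxne with h | h
        · exact ⟨1, Or.inl rfl, x, ⟨⟨hxne, hxI⟩, mul_ne_zero h2ne hxne, h⟩, one_mul x⟩
        · set z : ZMod p := x * (2 : ZMod p)⁻¹ with hz'
          have hzne : z ≠ 0 := mul_ne_zero hxne (inv_ne_zero h2ne)
          have h2z : 2 * z = x := by rw [hz']; field_simp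
          refine ⟨2, Or.inr rfl, z, ⟨⟨hzne, h⟩, ?_, ?_⟩, h2z⟩
          · rw [h2z]; exact hxne
          · rw [h2z]; exact hxI
      · rintro ⟨a, ha, b, ⟨⟨hbne, hbI⟩, h2bne, h2bI⟩, rfl⟩
        rcases ha with rfl | rfl
        · rw [one_mul]; exact ⟨hbne, hbI⟩
        · exact ⟨h2bne, h2bI⟩
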